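/- Let R be a subring of a commutative ring T with a common ideal C containing a T-regular element, with T flat over R. If R is a coherent ring, then T is a coherent ring. -/

import Mathlib

/-- A commutative ring is coherent if every finitely generated ideal is finitely
presented (as a module). -/
def IsCoherentRing (R : Type*) [CommRing R] : Prop :=
  ∀ I : Ideal R, I.FG → Module.FinitePresentation R I

open TensorProduct

set_option maxHeartbeats 1000000 in
set_option synthInstance.maxHeartbeats 1000000 in
/-- regular conductor situation with `T` flat over `R`; if `R` is
coherent, then so is `T`. -/
theorem stmt_13 (T : Type*) [CommRing T] (R : Subring T) (C : Ideal T)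
    (hCR : (C : Set T) ⊆ (R : Set T))
    (hreg : ∃ c ∈ C, c ∈ nonZeroDivisors T)
    (hflat : Module.Flat ↥R T)
    (hR : IsCoherentRing ↥R) :
    IsCoherentRing T := by
  classical
  intro J hJ
  obtain ⟨c, hcC, hc⟩ := hreg
  obtain ⟨s, hs⟩ := hJ
  -- the ideal of R generated by the c-multiples of the generators of J
  set g : T → ↥R := fun t => ⟨c * t, hCR (C.mul_mem_right t hcC)⟩ with hg
  set I : Ideal ↥R := Ideal.span (g '' ↑s) with hI
  have hIfg : I.FG := ⟨s.image g, by rw [Finset.coe_image]⟩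
  haveI : Module.FinitePresentation ↥R ↥I := hR I hIfg
  -- the R-linear inclusion of I into T
  set f₀ : ↥R →ₗ[↥R] T := Algebra.linearMap ↥R T with hf₀
  set f : ↥I →ₗ[↥R] T := f₀ ∘ₗ I.subtype with hf
  -- the canonical T-linear map T ⊗[R] I → T
  set φ : T ⊗[↥R] ↥I →ₗ[T] T := f.liftBaseChange T with hφ
  -- φ is injective since T is flat over R
  have hφinj : Function.Injective φ := by
    haveI := hflat
    have h1 : Function.Injective (LinearMap.lTensor T I.subtype) :=
      Module.Flat.lTensor_preserves_injective_linearMap I.subtype I.injective_subtype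
    have key : (φ.restrictScalars ↥R) =
        (TensorProduct.rid ↥R T).toLinearMap ∘ₗ LinearMap.lTensor T I.subtype := by
      apply TensorProduct.ext'
      intro t i
      simp [hφ, hf, hf₀, Algebra.smul_def, mul_comm]
    intro x y hxy
    have : (TensorProduct.rid ↥R T) (LinearMap.lTensor T I.subtype x)
        = (TensorProduct.rid ↥R T) (LinearMap.lTensor T I.subtype y) := by
      have hx := congrArg (fun m => m x) key
      have hy := congrArg (fun m => m y) key
      simp only [LinearMap.coe_restrictScalars, LinearMap.coe_comp, Function.comp_apply,
        LinearEquiv.coe_toLinearMap] at hx hy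
      rw [← hx, ← hy]; exact hxy
    exact h1 ((TensorProduct.rid ↥R T).injective this)
  -- multiplication by c on T
  set μ : T →ₗ[T] T := LinearMap.lsmul T T c with hμ
  have hμinj : Function.Injective μ := by
    intro x y hxy
    simp only [hμ, LinearMap.lsmul_apply, smul_eq_mul] at hxy
    have h0 : (x - y) * c = 0 := by rw [sub_mul, mul_comm x c, mul_comm y c, hxy, sub_self]
    exact sub_eq_zero.mp (hc.2 _ h0)
  -- the range of φ is c • J
  have hrange : LinearMap.range φ = Submodule.map μ J := by
    rw [hφ, LinearMap.range_liftBaseChange]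
    apply le_antisymm
    · rw [Submodule.span_le]
      rintro _ ⟨i, rfl⟩
      have hmem : ∀ r ∈ I, f₀ r ∈ Submodule.map μ J := by
        intro r hr
        refine Submodule.span_induction ?_ ?_ ?_ ?_ hr
        · rintro _ ⟨t, ht, rfl⟩
          exact ⟨t, hs ▸ Ideal.subset_span ht, rfl⟩
        · rw [map_zero]
          exact Submodule.zero_mem (Submodule.map μ J)
        · intro a b _ _ ha hb
          rw [map_add]
          exact Submodule.add_mem (Submodule.map μ J) ha hb
        · intro r x _ hx
          rw [map_smul]
          exact Submodule.smul_mem (Submodule.map μ J) (r : T) hx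
      exact hmem i.1 i.2
    · rw [← hs, Ideal.span, Submodule.map_span, Submodule.span_le]
      rintro _ ⟨t, ht, rfl⟩
      exact Submodule.subset_span ⟨⟨g t, Ideal.subset_span ⟨t, ht, rfl⟩⟩, rfl⟩
  -- assemble the equivalence T ⊗[R] I ≃ J
  let e1 : (T ⊗[↥R] ↥I) ≃ₗ[T] LinearMap.range φ := LinearEquiv.ofInjective φ hφinj
  let e2 : ↥J ≃ₗ[T] ↥(Submodule.map μ J) := Submodule.equivMapOfInjective μ hμinj J
  let e3 : LinearMap.range φ ≃ₗ[T] ↥(Submodule.map μ J) :=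
    LinearEquiv.ofEq _ _ hrange
  let e : (T ⊗[↥R] ↥I) ≃ₗ[T] ↥J := (e1.trans e3).trans e2.symm
  exact Module.finitePresentation_of_surjective e.toLinearMap e.surjective
    (by rw [LinearEquiv.ker]; exact Submodule.fg_bot)
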